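/- Let Ψ, Φ be frames for H₁, H₂ respectively. The map sending a bounded operator O : H₁ → H₂ to the matrix (⟨O ψ_n, φ_m⟩)_{m,n} (viewed as a bounded operator on ℓ²) is injective, and the map sending a bounded operator M on ℓ² to D_Φ ∘ M ∘ C_Ψ is surjective onto B(H₁, H₂). -/

import Mathlib

open scoped InnerProductSpace

noncomputable section

local notation "ℓ²" => lp (fun _ : ℕ => ℂ) 2

variable {H₁ H₂ H₃ : Type*}
  [NormedAddCommGroup H₁] [InnerProductSpace ℂ H₁] [CompleteSpace H₁]
  [NormedAddCommGroup H₂] [InnerProductSpace ℂ H₂] [CompleteSpace H₂]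
  [NormedAddCommGroup H₃] [InnerProductSpace ℂ H₃] [CompleteSpace H₃]

/-- `ψ` is a Bessel sequence with bound `B`:  `∑ₖ |⟨f, ψₖ⟩|² ≤ B ‖f‖²`.
(Note: the paper's `⟨f, ψₖ⟩`, linear in `f`, is Mathlib's `⟪ψ k, f⟫_ℂ`.) -/
def IsBessel {H : Type*} [NormedAddCommGroup H] [InnerProductSpace ℂ H]
    (ψ : ℕ → H) (B : ℝ) : Prop :=
  ∀ f : H, Summable (fun k => ‖⟪ψ k, f⟫_ℂ‖ ^ 2) ∧
    ∑' k, ‖⟪ψ k, f⟫_ℂ‖ ^ 2 ≤ B * ‖f‖ ^ 2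

/-- `ψ` is a frame with bounds `A`, `B`:  `A ‖f‖² ≤ ∑ₖ |⟨f, ψₖ⟩|² ≤ B ‖f‖²`. -/
def IsFrame {H : Type*} [NormedAddCommGroup H] [InnerProductSpace ℂ H]
    (ψ : ℕ → H) (A B : ℝ) : Prop :=
  0 < A ∧ ∀ f : H, Summable (fun k => ‖⟪ψ k, f⟫_ℂ‖ ^ 2) ∧
    A * ‖f‖ ^ 2 ≤ ∑' k, ‖⟪ψ k, f⟫_ℂ‖ ^ 2 ∧
    ∑' k, ‖⟪ψ k, f⟫_ℂ‖ ^ 2 ≤ B * ‖f‖ ^ 2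

/-- `C` is the analysis operator of `ψ`:  `C f = (⟨f, ψₖ⟩)ₖ`. -/
def IsAnalysis {H : Type*} [NormedAddCommGroup H] [InnerProductSpace ℂ H]
    (ψ : ℕ → H) (C : H →L[ℂ] ℓ²) : Prop :=
  ∀ (f : H) (k : ℕ), C f k = ⟪ψ k, f⟫_ℂ

/-- `D` is the synthesis operator of `ψ`:  `D c = ∑ₖ cₖ ψₖ`. -/
def IsSynthesis {H : Type*} [NormedAddCommGroup H] [InnerProductSpace ℂ H]
    (ψ : ℕ → H) (D : ℓ² →L[ℂ] H) : Prop :=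
  ∀ c : ℓ², HasSum (fun k => c k • ψ k) (D c)

/-- `S` is the frame operator of `ψ`:  `S f = ∑ₖ ⟨f, ψₖ⟩ ψₖ`. -/
def IsFrameOp {H : Type*} [NormedAddCommGroup H] [InnerProductSpace ℂ H]
    (ψ : ℕ → H) (S : H →L[ℂ] H) : Prop :=
  ∀ f : H, HasSum (fun k => ⟪ψ k, f⟫_ℂ • ψ k) (S f)

/-- `dψ` is the canonical dual of `ψ`, whose frame operator is `S`: `dψ k = S⁻¹ ψ k`. -/
def IsCanonicalDual {H : Type*} [NormedAddCommGroup H] [InnerProductSpace ℂ H]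
    (ψ : ℕ → H) (S : H →L[ℂ] H) (dψ : ℕ → H) : Prop :=
  IsFrameOp ψ S ∧ ∀ k, S (dψ k) = ψ k

/-- `ψ` is a Riesz basis with bounds `A`, `B`: it is complete and
`A ∑|cₖ|² ≤ ‖∑ cₖ ψₖ‖² ≤ B ∑|cₖ|²` for all finite sequences `c`. -/
def IsRieszBasis {H : Type*} [NormedAddCommGroup H] [InnerProductSpace ℂ H]
    (ψ : ℕ → H) (A B : ℝ) : Prop :=
  0 < A ∧ (Submodule.span ℂ (Set.range ψ)).topologicalClosure = ⊤ ∧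
    ∀ c : ℕ →₀ ℂ,
      A * ∑ k ∈ c.support, ‖c k‖ ^ 2 ≤ ‖∑ k ∈ c.support, c k • ψ k‖ ^ 2 ∧
      ‖∑ k ∈ c.support, c k • ψ k‖ ^ 2 ≤ B * ∑ k ∈ c.support, ‖c k‖ ^ 2

/-- The `ℓ²` norm squared is the sum of coordinate norms squared. -/
lemma l2_norm_sq (x : ℓ²) : ‖x‖ ^ 2 = ∑' k, ‖x k‖ ^ 2 := by
  have h := lp.norm_rpow_eq_tsum (p := 2) (by norm_num) x
  have h2 : ((2 : ENNReal)).toReal = ((2 : ℕ) : ℝ) := by norm_num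
  rw [h2] at h
  simpa [Real.rpow_natCast] using h

/-- A vector orthogonal to every element of a frame is zero. -/
lemma frame_eq_zero {H : Type*} [NormedAddCommGroup H] [InnerProductSpace ℂ H]
    {ψ : ℕ → H} {A B : ℝ} (hΨ : IsFrame ψ A B) {f : H}
    (h : ∀ k, ⟪ψ k, f⟫_ℂ = 0) : f = 0 := by
  obtain ⟨hA, hfr⟩ := hΨ
  have h1 := (hfr f).2.1
  have : (∑' k, ‖⟪ψ k, f⟫_ℂ‖ ^ 2) = 0 := by simp [h]
  rw [this] at h1
  have hsq : ‖f‖ ^ 2 = 0 := le_antisymm (by nlinarith) (sq_nonneg _)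
  exact norm_eq_zero.mp (pow_eq_zero_iff (by norm_num : (2:ℕ) ≠ 0) |>.mp hsq)

/-- The span of a frame is dense. -/
lemma frame_dense {H : Type*} [NormedAddCommGroup H] [InnerProductSpace ℂ H]
    [CompleteSpace H] {ψ : ℕ → H} {A B : ℝ} (hΨ : IsFrame ψ A B) :
    Dense ((Submodule.span ℂ (Set.range ψ)) : Set H) := by
  rw [Submodule.dense_iff_topologicalClosure_eq_top,
    Submodule.topologicalClosure_eq_top_iff]
  rw [Submodule.eq_bot_iff]
  intro f hf
  refine frame_eq_zero hΨ fun k => ?_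
  exact hf (ψ k) (Submodule.subset_span (Set.mem_range_self k))

/-- A coercive operator on a Hilbert space is bijective. -/
lemma coercive_bijective {H : Type*} [NormedAddCommGroup H] [InnerProductSpace ℂ H]
    [CompleteSpace H] (T : H →L[ℂ] H) {A : ℝ} (hA : 0 < A)
    (hcoer : ∀ f : H, A * ‖f‖ ^ 2 ≤ (⟪f, T f⟫_ℂ).re) :
    T.ker = ⊥ ∧ T.range = ⊤ := by
  have hbdd : ∀ f : H, A * ‖f‖ ≤ ‖T f‖ := by
    intro f
    rcases eq_or_ne f 0 with rfl | hf
    · simp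
    · have h1 : A * ‖f‖ ^ 2 ≤ ‖⟪f, T f⟫_ℂ‖ := by
        refine (hcoer f).trans ?_
        exact (le_abs_self _).trans (Complex.abs_re_le_norm _)
      have h2 : ‖⟪f, T f⟫_ℂ‖ ≤ ‖f‖ * ‖T f‖ := norm_inner_le_norm _ _
      have hfpos : 0 < ‖f‖ := norm_pos_iff.mpr hf
      nlinarith
  have hanti : AntilipschitzWith (⟨A⁻¹, by positivity⟩ : NNReal) T := by
    refine T.antilipschitz_of_bound fun x => ?_
    have := hbdd x
    show ‖x‖ ≤ A⁻¹ * ‖T x‖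
    rw [inv_mul_eq_div, le_div_iff₀ hA]
    linarith [hbdd x]
  constructor
  · exact LinearMap.ker_eq_bot_of_injective hanti.injective
  · have hclosed : IsClosed (Set.range T) := hanti.isClosed_range T.uniformContinuous
    have horth : T.rangeᗮ = ⊥ := by
      rw [Submodule.eq_bot_iff]
      intro g hg
      have h0 : ⟪T g, g⟫_ℂ = 0 := hg (T g) (LinearMap.mem_range_self (T : H →ₗ[ℂ] H) g)
      have h0' : ⟪g, T g⟫_ℂ = 0 := by
        rw [← inner_conj_symm, h0, map_zero]
      have := hcoer g
      rw [h0'] at this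
      simp only [Complex.zero_re] at this
      have hsq : ‖g‖ ^ 2 = 0 := le_antisymm (by nlinarith) (sq_nonneg _)
      exact norm_eq_zero.mp (pow_eq_zero_iff (by norm_num : (2:ℕ) ≠ 0) |>.mp hsq)
    have : T.range.topologicalClosure = ⊤ := by
      rw [Submodule.topologicalClosure_eq_top_iff, horth]
    rw [← this]
    exact le_antisymm (Submodule.le_topologicalClosure _)
      (by
        intro x hx
        have : x ∈ closure (Set.range T) := by
          exact hx
        rwa [hclosed.closure_eq] at this)

set_option maxHeartbeats 1000000 in
/-- For frames `ψ`, `φ`, the map `O ↦ (⟨O ψₙ, φₘ⟩)` is injective and the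
map `M ↦ D_Φ ∘ M ∘ C_Ψ` is surjective onto `B(H₁, H₂)`. -/
theorem stmt4 {ψ : ℕ → H₁} {φ : ℕ → H₂} {A B A' B' : ℝ}
    (hΨ : IsFrame ψ A B) (hΦ : IsFrame φ A' B')
    (C : H₁ →L[ℂ] ℓ²) (hC : IsAnalysis ψ C)
    (D : ℓ² →L[ℂ] H₂) (hD : IsSynthesis φ D) :
    (∀ O₁ O₂ : H₁ →L[ℂ] H₂,
        (∀ m n, ⟪φ m, O₁ (ψ n)⟫_ℂ = ⟪φ m, O₂ (ψ n)⟫_ℂ) → O₁ = O₂) ∧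
    (∀ O : H₁ →L[ℂ] H₂, ∃ M : ℓ² →L[ℂ] ℓ², D.comp (M.comp C) = O) := by
  constructor
  · -- injectivity
    intro O₁ O₂ h
    refine ContinuousLinearMap.ext_on (frame_dense hΨ) ?_
    rintro _ ⟨n, rfl⟩
    have : ∀ m, ⟪φ m, O₁ (ψ n) - O₂ (ψ n)⟫_ℂ = 0 := by
      intro m
      rw [inner_sub_right, h m n, sub_self]
    have := frame_eq_zero hΦ this
    simpa [sub_eq_zero] using this
  · -- surjectivity
    intro O
    -- `D (lp.single 2 k 1) = φ k`
    have hDsingle : ∀ k, D (lp.single 2 k (1 : ℂ)) = φ k := by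
      intro k
      set c : ℓ² := lp.single 2 k (1 : ℂ) with hc
      refine (hD c).unique ?_
      have he : (fun j => c j • φ j) = fun j => if j = k then φ k else 0 := by
        funext j
        rcases eq_or_ne j k with rfl | hj
        · simp [hc, lp.single_apply_self]
        · simp [hc, lp.single_apply_ne _ _ _ hj, hj]
      rw [he]
      exact hasSum_ite_eq k (φ k)
    -- `D.adjoint` is the analysis operator of `φ`
    have hDadj : ∀ (f : H₂) (k : ℕ), (D.adjoint f) k = ⟪φ k, f⟫_ℂ := by
      intro f k
      have h1 : ⟪lp.single 2 k (1 : ℂ), D.adjoint f⟫_ℂ = ⟪D (lp.single 2 k 1), f⟫_ℂ :=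
        ContinuousLinearMap.adjoint_inner_right D _ _
      rw [hDsingle k] at h1
      have h2 : ⟪lp.single 2 k (1 : ℂ), D.adjoint f⟫_ℂ = ⟪(1 : ℂ), (D.adjoint f) k⟫_ℂ :=
        lp.inner_single_left k (1 : ℂ) (D.adjoint f)
      simp only [RCLike.inner_apply, map_one, one_mul, mul_one] at h2
      rw [← h2, h1]
    -- coercivity of `S_Φ = D ∘ D†`
    have hSΦ : ∀ f : H₂, A' * ‖f‖ ^ 2 ≤ (⟪f, (D.comp D.adjoint) f⟫_ℂ).re := by
      intro f
      have h1 : ⟪f, (D.comp D.adjoint) f⟫_ℂ = ⟪D.adjoint f, D.adjoint f⟫_ℂ := by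
        simp only [ContinuousLinearMap.comp_apply]
        rw [← ContinuousLinearMap.adjoint_inner_left]
      rw [h1, inner_self_eq_norm_sq_to_K]
      have h2 : ‖D.adjoint f‖ ^ 2 = ∑' k, ‖⟪φ k, f⟫_ℂ‖ ^ 2 := by
        rw [l2_norm_sq]
        exact tsum_congr fun k => by rw [hDadj f k]
      have h3 := (hΦ.2 f).2.1
      calc A' * ‖f‖ ^ 2 ≤ ∑' k, ‖⟪φ k, f⟫_ℂ‖ ^ 2 := h3
        _ = ‖D.adjoint f‖ ^ 2 := h2.symm
        _ = ((‖D.adjoint f‖ : ℂ) ^ 2).re := by norm_cast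
    -- coercivity of `S_Ψ = C† ∘ C`
    have hSΨ : ∀ f : H₁, A * ‖f‖ ^ 2 ≤ (⟪f, (C.adjoint.comp C) f⟫_ℂ).re := by
      intro f
      have h1 : ⟪f, (C.adjoint.comp C) f⟫_ℂ = ⟪C f, C f⟫_ℂ := by
        simp only [ContinuousLinearMap.comp_apply]
        rw [ContinuousLinearMap.adjoint_inner_right]
      rw [h1, inner_self_eq_norm_sq_to_K]
      have h2 : ‖C f‖ ^ 2 = ∑' k, ‖⟪ψ k, f⟫_ℂ‖ ^ 2 := by
        rw [l2_norm_sq]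
        exact tsum_congr fun k => by rw [hC f k]
      have h3 := (hΨ.2 f).2.1
      calc A * ‖f‖ ^ 2 ≤ ∑' k, ‖⟪ψ k, f⟫_ℂ‖ ^ 2 := h3
        _ = ‖C f‖ ^ 2 := h2.symm
        _ = ((‖C f‖ : ℂ) ^ 2).re := by norm_cast
    obtain ⟨hkΦ, hrΦ⟩ := coercive_bijective (D.comp D.adjoint) hΦ.1 hSΦ
    obtain ⟨hkΨ, hrΨ⟩ := coercive_bijective (C.adjoint.comp C) hΨ.1 hSΨ
    set eΦ := ContinuousLinearEquiv.ofBijective (D.comp D.adjoint) hkΦ hrΦ with heΦ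
    set eΨ := ContinuousLinearEquiv.ofBijective (C.adjoint.comp C) hkΨ hrΨ with heΨ
    refine ⟨(D.adjoint.comp (eΦ.symm : H₂ →L[ℂ] H₂)).comp
      (O.comp ((eΨ.symm : H₁ →L[ℂ] H₁).comp C.adjoint)), ?_⟩
    ext f
    simp only [ContinuousLinearMap.comp_apply, ContinuousLinearMap.coe_coe, ContinuousLinearEquiv.coe_coe]
    have h1 : C.adjoint (C f) = eΨ f :=
      (ContinuousLinearEquiv.coeFn_ofBijective (C.adjoint.comp C) hkΨ hrΨ ▸ rfl)
    rw [h1, eΨ.symm_apply_apply]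
    have h2 : D (D.adjoint (eΦ.symm (O f))) = eΦ (eΦ.symm (O f)) :=
      (ContinuousLinearEquiv.coeFn_ofBijective (D.comp D.adjoint) hkΦ hrΦ ▸ rfl)
    rw [h2, eΦ.apply_symm_apply]
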